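/- Let M be a linear operator on R^d with ||M|| ≤ 1, and B_n = (M^n)ᵀ M^n − (M^{n+1})ᵀ M^{n+1}. Then for every n ≥ 1, n·tr(B_n) ≤ tr(Mᵀ M) ≤ rank(M). -/

import Mathlib

open ContinuousLinearMap RealInnerProductSpace Module

variable {E : Type*} [NormedAddCommGroup E] [InnerProductSpace ℝ E] [FiniteDimensional ℝ E]

lemma trace_eq_sum_inner' {ι : Type*} [Fintype ι] [DecidableEq ι] (b : OrthonormalBasis ι ℝ E)
    (T : E →ₗ[ℝ] E) :
    LinearMap.trace ℝ E T = ∑ i, ⟪b i, T (b i)⟫ := by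
  rw [LinearMap.trace_eq_matrix_trace ℝ b.toBasis, Matrix.trace]
  congr 1
  ext i
  rw [Matrix.diag_apply, LinearMap.toMatrix_apply, b.coe_toBasis_repr_apply,
    b.repr_apply_apply, b.coe_toBasis]

lemma isPositive_one_sub {M : E →L[ℝ] E} (hM : ‖M‖ ≤ 1) : (1 - adjoint M * M).IsPositive := by
  rw [isPositive_def']
  constructor
  · unfold IsSelfAdjoint
    simp [star_sub, star_mul, star_eq_adjoint, adjoint_adjoint]
  · intro x
    have h1 : ‖M x‖ ≤ ‖x‖ := by
      calc ‖M x‖ ≤ ‖M‖ * ‖x‖ := M.le_opNorm x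
      _ ≤ 1 * ‖x‖ := by gcongr
      _ = ‖x‖ := one_mul _
    have : reApplyInnerSelf (1 - adjoint M * M) x = ‖x‖^2 - ‖M x‖^2 := by
      simp [reApplyInnerSelf, inner_sub_left, mul_apply, adjoint_inner_left,
        real_inner_self_eq_norm_sq]
    rw [this]
    nlinarith [norm_nonneg (M x), norm_nonneg x]

lemma isPositive_adj_mul (A : E →L[ℝ] E) : (adjoint A * A).IsPositive := by
  simpa [mul_def] using isPositive_adjoint_comp_self A

lemma trace_nonneg {D : E →L[ℝ] E} (hD : D.IsPositive) :
    0 ≤ LinearMap.trace ℝ E D.toLinearMap := by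
  classical
  rw [trace_eq_sum_inner' (stdOrthonormalBasis ℝ E)]
  refine Finset.sum_nonneg fun i _ => ?_
  simpa using hD.inner_nonneg_right (stdOrthonormalBasis ℝ E i)

lemma trace_conj_le {D N : E →L[ℝ] E} (hD : D.IsPositive) (hN : ‖N‖ ≤ 1) :
    LinearMap.trace ℝ E ((adjoint N * D * N).toLinearMap)
      ≤ LinearMap.trace ℝ E D.toLinearMap := by
  classical
  have hS : D.toLinearMap.IsSymmetric :=
    (isSelfAdjoint_iff_isSymmetric).mp hD.isSelfAdjoint
  set r := finrank ℝ E with hrdef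
  have hr : finrank ℝ E = r := rfl
  set b := hS.eigenvectorBasis hr with hb
  set μ := hS.eigenvalues hr with hμ
  have heig : ∀ i, D (b i) = μ i • b i := fun i =>
    hS.apply_eigenvectorBasis hr i
  have hμ0 : ∀ i, 0 ≤ μ i := fun i => by
    have := hD.inner_nonneg_right (b i)
    have hb1 : ‖b i‖ = 1 := b.orthonormal.1 i
    simp only [heig i, real_inner_smul_right, real_inner_self_eq_norm_sq, hb1] at this
    simpa using this
  have key : LinearMap.trace ℝ E ((adjoint N * D * N).toLinearMap)
      = LinearMap.trace ℝ E ((D * (N * adjoint N)).toLinearMap) := by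
    rw [mul_assoc]
    have h1 := LinearMap.trace_mul_comm ℝ (adjoint N).toLinearMap ((D * N).toLinearMap)
    simp only [mul_def, toLinearMap_comp, ← Module.End.mul_eq_comp] at *
    rw [h1, mul_assoc]
  rw [key, trace_eq_sum_inner' b, trace_eq_sum_inner' b]
  refine Finset.sum_le_sum fun i _ => ?_
  have hb1 : ‖b i‖ = 1 := b.orthonormal.1 i
  have lhs : ⟪b i, ((D * (N * adjoint N)).toLinearMap) (b i)⟫
      = μ i * ‖adjoint N (b i)‖^2 := by
    have : ⟪b i, D (N (adjoint N (b i)))⟫ = ⟪D (b i), N (adjoint N (b i))⟫ :=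
      (hS (b i) (N (adjoint N (b i)))).symm
    simp only [coe_mul, Module.End.mul_apply, ContinuousLinearMap.coe_coe,
      Function.comp_apply, coe_comp']
    rw [this, heig i, real_inner_smul_left, ← adjoint_inner_left,
      real_inner_self_eq_norm_sq]
  have rhs : ⟪b i, (D.toLinearMap) (b i)⟫ = μ i := by
    simp [heig i, real_inner_smul_right, real_inner_self_eq_norm_sq, hb1]
  rw [lhs, rhs]
  have hna : ‖adjoint N (b i)‖ ≤ 1 := by
    calc ‖adjoint N (b i)‖ ≤ ‖adjoint N‖ * ‖b i‖ := (adjoint N).le_opNorm _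
    _ = ‖N‖ := by rw [hb1, mul_one, LinearIsometryEquiv.norm_map]
    _ ≤ 1 := hN
  have hsq : ‖adjoint N (b i)‖ ^ 2 ≤ 1 := by nlinarith [norm_nonneg (adjoint N (b i))]
  nlinarith [mul_le_mul_of_nonneg_left hsq (hμ0 i)]

set_option maxHeartbeats 1000000 in
theorem trace_Bn_le_rank (d : ℕ)
    (M : EuclideanSpace ℝ (Fin d) →L[ℝ] EuclideanSpace ℝ (Fin d))
    (hM : ‖M‖ ≤ 1) (n : ℕ) (hn : 1 ≤ n) :
    (n : ℝ) * LinearMap.trace ℝ (EuclideanSpace ℝ (Fin d))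
        ((adjoint (M ^ n) * M ^ n - adjoint (M ^ (n + 1)) * M ^ (n + 1)).toLinearMap)
      ≤ LinearMap.trace ℝ (EuclideanSpace ℝ (Fin d)) ((adjoint M * M).toLinearMap)
    ∧ LinearMap.trace ℝ (EuclideanSpace ℝ (Fin d)) ((adjoint M * M).toLinearMap)
      ≤ (Module.finrank ℝ (LinearMap.range M.toLinearMap) : ℝ) := by
  classical
  set f : ℕ → ℝ := fun k => LinearMap.trace ℝ (EuclideanSpace ℝ (Fin d))
    ((adjoint (M ^ k) * M ^ k).toLinearMap) with hf
  set g : ℕ → ℝ := fun k => LinearMap.trace ℝ (EuclideanSpace ℝ (Fin d))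
    ((adjoint (M ^ k) * (1 - adjoint M * M) * M ^ k).toLinearMap) with hg
  have hP : (1 - adjoint M * M).IsPositive := isPositive_one_sub hM
  have hgpos : ∀ k, (adjoint (M ^ k) * (1 - adjoint M * M) * M ^ k).IsPositive := fun k => by
    simpa [mul_def, mul_assoc, ContinuousLinearMap.comp_assoc] using hP.adjoint_conj (M ^ k)
  have hadj_succ : ∀ k : ℕ, adjoint (M ^ (k+1)) * M ^ (k+1)
      = adjoint (M ^ k) * (adjoint M * M) * M ^ k := fun k => by
    rw [pow_succ']
    simp only [← star_eq_adjoint, star_mul, mul_assoc]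
  have hg_eq : ∀ k, g k = f k - f (k+1) := fun k => by
    have h : adjoint (M ^ k) * (1 - adjoint M * M) * M ^ k
        = adjoint (M ^ k) * M ^ k - adjoint (M ^ (k+1)) * M ^ (k+1) := by
      rw [hadj_succ k]; noncomm_ring
    simp only [hg, hf, h, toLinearMap_sub, map_sub]
  have hg_anti : Antitone g := by
    refine antitone_nat_of_succ_le fun k => ?_
    have hrw : adjoint (M ^ (k+1)) * (1 - adjoint M * M) * M ^ (k+1)
        = adjoint M * (adjoint (M ^ k) * (1 - adjoint M * M) * M ^ k) * M := by
      rw [pow_succ]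
      simp only [← star_eq_adjoint, star_mul, mul_assoc]
    simp only [hg, hrw]
    exact trace_conj_le (hgpos k) hM
  have hf_nonneg : ∀ k, 0 ≤ f k := fun k => trace_nonneg (isPositive_adj_mul (M ^ k))
  have htel : ∑ i ∈ Finset.range n, g (i+1) = f 1 - f (n+1) := by
    have h := Finset.sum_range_sub' (fun i => f (i+1)) n
    simp only [hg_eq]
    exact h
  have hBn : LinearMap.trace ℝ (EuclideanSpace ℝ (Fin d))
      ((adjoint (M ^ n) * M ^ n - adjoint (M ^ (n + 1)) * M ^ (n + 1)).toLinearMap) = g n := by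
    rw [hg_eq n]
    simp only [hf, toLinearMap_sub, map_sub]
  have hf1 : f 1 = LinearMap.trace ℝ (EuclideanSpace ℝ (Fin d)) ((adjoint M * M).toLinearMap) := by
    simp only [hf, pow_one]
  constructor
  · rw [hBn, ← hf1]
    have h1 : (n : ℝ) * g n ≤ ∑ i ∈ Finset.range n, g (i+1) := by
      calc (n : ℝ) * g n = ∑ _i ∈ Finset.range n, g n := by
            rw [Finset.sum_const, Finset.card_range, nsmul_eq_mul]
      _ ≤ _ := Finset.sum_le_sum fun i hi =>
            hg_anti (Nat.succ_le_of_lt (Finset.mem_range.mp hi))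
    rw [htel] at h1
    have h2 := hf_nonneg (n+1)
    linarith
  · have hC : (adjoint M * M).IsPositive := isPositive_adj_mul M
    have hS : ((adjoint M * M).toLinearMap).IsSymmetric :=
      isSelfAdjoint_iff_isSymmetric.mp hC.isSelfAdjoint
    have hr : finrank ℝ (EuclideanSpace ℝ (Fin d)) = d := finrank_euclideanSpace_fin
    set b := hS.eigenvectorBasis hr with hbdef
    set μ := hS.eigenvalues hr with hμdef
    have heig : ∀ i, (adjoint M * M) (b i) = μ i • b i := fun i =>
      hS.apply_eigenvectorBasis hr i
    have hb1 : ∀ i, ‖b i‖ = 1 := b.orthonormal.1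
    have hμval : ∀ i, μ i = ‖M (b i)‖ ^ 2 := fun i => by
      have h1 : ⟪b i, (adjoint M * M) (b i)⟫ = μ i := by
        rw [heig i, real_inner_smul_right, real_inner_self_eq_norm_sq, hb1 i]; ring
      rw [← h1, ContinuousLinearMap.mul_apply, adjoint_inner_right, real_inner_self_eq_norm_sq]
    have hμ1 : ∀ i, μ i ≤ 1 := fun i => by
      rw [hμval i]
      have hle : ‖M (b i)‖ ≤ 1 := by
        calc ‖M (b i)‖ ≤ ‖M‖ * ‖b i‖ := M.le_opNorm _
        _ ≤ 1 := by rw [hb1 i, mul_one]; exact hM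
      nlinarith [norm_nonneg (M (b i))]
    have htr : LinearMap.trace ℝ (EuclideanSpace ℝ (Fin d)) ((adjoint M * M).toLinearMap)
        = ∑ i, μ i := by
      rw [trace_eq_sum_inner' b]
      refine Finset.sum_congr rfl fun i _ => ?_
      rw [ContinuousLinearMap.coe_coe, heig i, real_inner_smul_right,
        real_inner_self_eq_norm_sq, hb1 i]
      ring
    set s := Finset.univ.filter (fun i => μ i ≠ 0) with hsdef
    have hsum : ∑ i, μ i = ∑ i ∈ s, μ i := (Finset.sum_filter_ne_zero _).symm
    have hcard : ∑ i ∈ s, μ i ≤ (s.card : ℝ) := by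
      calc ∑ i ∈ s, μ i ≤ ∑ _i ∈ s, (1 : ℝ) := Finset.sum_le_sum fun i _ => hμ1 i
      _ = s.card := by simp
    have hnz : ∀ i : {i // i ∈ s}, ‖M (b i.1)‖ ≠ 0 := fun i => by
      have h0 : μ i.1 ≠ 0 := (Finset.mem_filter.mp i.2).2
      rw [hμval] at h0
      intro h
      exact h0 (by rw [h]; ring)
    set R := LinearMap.range M.toLinearMap with hRdef
    set w : {i // i ∈ s} → R := fun i =>
      (‖M (b i.1)‖)⁻¹ • (⟨M (b i.1), LinearMap.mem_range_self _ _⟩ : R) with hwdef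
    have hMM : ∀ i j, ⟪M (b i), M (b j)⟫ = if i = j then μ i else 0 := fun i j => by
      rw [← adjoint_inner_right, ← ContinuousLinearMap.mul_apply, heig j, real_inner_smul_right]
      rw [orthonormal_iff_ite.mp b.orthonormal i j]
      by_cases h : i = j <;> simp [h]
    have hw : Orthonormal ℝ w := by
      rw [orthonormal_iff_ite]
      intro i j
      have : ⟪w i, w j⟫ = (‖M (b i.1)‖)⁻¹ * ((‖M (b j.1)‖)⁻¹ * ⟪M (b i.1), M (b j.1)⟫) := by
        simp only [hwdef, Submodule.coe_inner, Submodule.coe_smul,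
          real_inner_smul_left, real_inner_smul_right]
        ring
      rw [this, hMM]
      by_cases h : i = j
      · subst h
        simp only [if_true, eq_self_iff_true]
        rw [hμval i, sq, inv_mul_cancel_left₀ (hnz i), inv_mul_cancel₀ (hnz i)]
      · have h' : (i : Fin d) ≠ (j : Fin d) := fun hc => h (Subtype.ext hc)
        simp [h, h']
    have hcard2 : Fintype.card {i // i ∈ s} ≤ finrank ℝ R :=
      hw.linearIndependent.fintype_card_le_finrank
    rw [Fintype.card_coe] at hcard2
    rw [htr, hsum]
    calc ∑ i ∈ s, μ i ≤ (s.card : ℝ) := hcard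
    _ ≤ (finrank ℝ R : ℝ) := by exact_mod_cast hcard2
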